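/- With $\lambda,\lambda',\lambda_1,\ldots,\lambda_{n+1}$ as in the wild 1-motive construction ($n\geq 3$), let $\Lambda$ be the subgroup of $\mathbb{Q}^\times\times\mathbb{Q}^\times$ generated by $\lambda,\lambda_1,\ldots,\lambda_{n+1}$ and $\Lambda'$ the subgroup generated by $\lambda_1,\ldots,\lambda_{n+1},\lambda'$. Then $\Lambda\cap\Lambda'$ equals the subgroup generated by $\lambda_1,\ldots,\lambda_{n+1}$; in particular $\lambda\notin\Lambda'$ and $\lambda'\notin\Lambda$. -/

import Mathlib

/-- The generators `λ₁ = (u 0, 1)`, `λ_{j+1} = (u j, u (j-1))` for `1 ≤ j ≤ n`,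
`λ_{n+2} = (1, u (n))` (indices 0-based, family `u` of size `n+1`). -/
def wildGens {G : Type*} [Group G] {n : ℕ} (u : Fin (n + 1) → G) :
    Fin (n + 2) → G × G := fun j =>
  (if h : (j : ℕ) < n + 1 then u ⟨j, h⟩ else 1,
   if h : 0 < (j : ℕ) then u ⟨(j : ℕ) - 1, by have := j.isLt; omega⟩ else 1)

/-- The detector homomorphism `(x, y) ↦ v_p(y) - v_{p'}(x)`. -/
def detectHom (p p' : ℕ) (hp : p.Prime) (hp' : p'.Prime) :
    (ℚˣ × ℚˣ) →* Multiplicative ℤ where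
  toFun x := Multiplicative.ofAdd (padicValRat p (x.2 : ℚ) - padicValRat p' (x.1 : ℚ))
  map_one' := by simp
  map_mul' a b := by
    haveI := Fact.mk hp; haveI := Fact.mk hp'
    simp only [Prod.snd_mul, Prod.fst_mul, Units.val_mul,
      padicValRat.mul (Units.ne_zero _) (Units.ne_zero _), ← ofAdd_add]
    congr 1
    ring

theorem detectHom_apply (p p' : ℕ) (hp : p.Prime) (hp' : p'.Prime) (x : ℚˣ × ℚˣ) :
    detectHom p p' hp hp' x
      = Multiplicative.ofAdd (padicValRat p (x.2 : ℚ) - padicValRat p' (x.1 : ℚ)) := rfl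

theorem inf_of_wild_subgroups (n : ℕ) (q : Fin (n + 3) → ℕ)
    (hq : ∀ i, (q i).Prime) (hinj : Function.Injective q)
    (N N' : ℕ) (hN : 1 ≤ N) (hN' : 1 ≤ N')
    (u : Fin (n + 3) → ℚˣ) (hu : ∀ i, (u i : ℚ) = (q i : ℚ)) :
    Subgroup.closure (insert ((1 : ℚˣ), (u 0) ^ N) (Set.range (wildGens u))) ⊓
        Subgroup.closure (insert ((u (Fin.last (n + 2))) ^ N', (1 : ℚˣ))
          (Set.range (wildGens u)))
      = Subgroup.closure (Set.range (wildGens u)) ∧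
    ((1 : ℚˣ), (u 0) ^ N) ∉
        Subgroup.closure (insert ((u (Fin.last (n + 2))) ^ N', (1 : ℚˣ))
          (Set.range (wildGens u))) ∧
    ((u (Fin.last (n + 2))) ^ N', (1 : ℚˣ)) ∉
        Subgroup.closure (insert ((1 : ℚˣ), (u 0) ^ N) (Set.range (wildGens u))) := by
  -- basic valuation computations
  have key : ∀ i j : Fin (n + 3), padicValRat (q j) (u i : ℚ)
      = if (i : ℕ) = (j : ℕ) then 1 else 0 := by
    intro i j
    rw [hu i, padicValRat.of_nat]
    by_cases h : (i : ℕ) = (j : ℕ)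
    · have hij : i = j := Fin.ext h
      subst hij
      simp [h, padicValNat.self (hq i).one_lt]
    · haveI := Fact.mk (hq i); haveI := Fact.mk (hq j)
      have hne : q j ≠ q i := fun hh => h ((hinj hh).symm ▸ rfl)
      simp [h, padicValNat_primes hne]
  have keypow : ∀ (i j : Fin (n + 3)) (m : ℕ), padicValRat (q j) (((u i) ^ m : ℚˣ) : ℚ)
      = m * (if (i : ℕ) = (j : ℕ) then 1 else 0) := by
    intro i j m
    haveI := Fact.mk (hq j)
    rw [Units.val_pow_eq_pow_val, padicValRat.pow (u i : ℚ), key]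
  set a : ℚˣ × ℚˣ := ((1 : ℚˣ), (u 0) ^ N) with ha
  set b : ℚˣ × ℚˣ := ((u (Fin.last (n + 2))) ^ N', (1 : ℚˣ)) with hb
  set S : Set (ℚˣ × ℚˣ) := Set.range (wildGens u) with hS
  -- the two detector homomorphisms
  set φ : (ℚˣ × ℚˣ) →* Multiplicative ℤ := detectHom (q 0) (q 1) (hq 0) (hq 1) with hφ
  set ψ : (ℚˣ × ℚˣ) →* Multiplicative ℤ :=
    (detectHom (q (Fin.last (n + 2))) (q ⟨n + 1, by omega⟩) (hq _) (hq _)).comp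
      (MulEquiv.prodComm : ℚˣ × ℚˣ ≃* ℚˣ × ℚˣ).toMonoidHom with hψ
  -- φ kills the generators
  have hφS : ∀ x ∈ S, φ x = 1 := by
    rintro _ ⟨j, rfl⟩
    rw [hφ, detectHom_apply, ofAdd_eq_one]
    rw [wildGens]
    simp only
    split_ifs with h1 h2 h2
    · rw [key, key]
      simp only [Fin.val_zero, Fin.val_one]
      split_ifs <;> first | omega | simp_all
    · rw [key, Units.val_one, padicValRat.one]
      simp only [Fin.val_zero]
      have := j.isLt
      split_ifs <;> first | omega | simp_all
    · rw [key, Units.val_one, padicValRat.one]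
      simp only [Fin.val_one]
      split_ifs <;> first | omega | simp_all
    · have := j.isLt; omega
  -- φ kills b, and φ a = N
  have hφb : φ b = 1 := by
    rw [hφ, detectHom_apply, ofAdd_eq_one, hb]
    simp only
    rw [keypow, Units.val_one, padicValRat.one]
    simp only [Fin.val_last, Fin.val_one]
    split_ifs <;> first | omega | simp_all
  have hφa : φ a = Multiplicative.ofAdd (N : ℤ) := by
    rw [hφ, detectHom_apply, ha]
    simp only
    rw [keypow, Units.val_one, padicValRat.one]
    simp only [Fin.val_zero, if_pos rfl]
    simp
  -- ψ kills the generators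
  have hψS : ∀ x ∈ S, ψ x = 1 := by
    rintro _ ⟨j, rfl⟩
    rw [hψ]
    simp only [MonoidHom.comp_apply, MulEquiv.coe_toMonoidHom, MulEquiv.coe_prodComm]
    rw [detectHom_apply, ofAdd_eq_one]
    rw [wildGens]
    simp only [Prod.snd_swap, Prod.fst_swap]
    have hmk : ∀ h : n + 1 < n + 3, ((⟨n + 1, h⟩ : Fin (n + 3)) : ℕ) = n + 1 := fun _ => rfl
    split_ifs with h1 h2 h2
    · rw [key, key]
      simp only [Fin.val_last, hmk]
      split_ifs <;> first | omega | simp_all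
    · rw [key, Units.val_one, padicValRat.one]
      simp only [Fin.val_last, hmk]
      have := j.isLt
      split_ifs <;> first | omega | simp_all
    · rw [key, Units.val_one, padicValRat.one]
      simp only [hmk]
      split_ifs <;> first | omega | simp_all
    · have := j.isLt; omega
  have hψa : ψ a = 1 := by
    rw [hψ]
    simp only [MonoidHom.comp_apply, MulEquiv.coe_toMonoidHom, MulEquiv.coe_prodComm]
    rw [detectHom_apply, ofAdd_eq_one, ha]
    simp only [Prod.snd_swap, Prod.fst_swap]
    rw [keypow, Units.val_one, padicValRat.one]
    have hmk : ∀ h : n + 1 < n + 3, ((⟨n + 1, h⟩ : Fin (n + 3)) : ℕ) = n + 1 := fun _ => rfl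
    simp only [Fin.val_zero, hmk]
    split_ifs <;> first | omega | simp_all
  have hψb : ψ b = Multiplicative.ofAdd (N' : ℤ) := by
    rw [hψ]
    simp only [MonoidHom.comp_apply, MulEquiv.coe_toMonoidHom, MulEquiv.coe_prodComm]
    rw [detectHom_apply, hb]
    simp only [Prod.snd_swap, Prod.fst_swap]
    rw [keypow, Units.val_one, padicValRat.one]
    simp only [Fin.val_last, if_pos rfl]
    simp
  -- subgroups in kernels
  have hΛ'ker : Subgroup.closure (insert b S) ≤ φ.ker := by
    rw [Subgroup.closure_le]
    rintro x (rfl | hx)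
    · exact hφb
    · exact hφS x hx
  have hΛker : Subgroup.closure (insert a S) ≤ ψ.ker := by
    rw [Subgroup.closure_le]
    rintro x (rfl | hx)
    · exact hψa
    · exact hψS x hx
  have hSφker : Subgroup.closure S ≤ φ.ker := by
    rw [Subgroup.closure_le]; exact hφS
  refine ⟨?_, ?_, ?_⟩
  · apply le_antisymm
    · intro x hx
      obtain ⟨hx1, hx2⟩ := Subgroup.mem_inf.mp hx
      have hx2' : φ x = 1 := hΛ'ker hx2
      rw [Set.insert_eq, Subgroup.closure_union, ← Subgroup.zpowers_eq_closure,
        Subgroup.mem_sup] at hx1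
      obtain ⟨y, hy, z, hz, rfl⟩ := hx1
      obtain ⟨k, rfl⟩ := hy
      have hval : φ (a ^ k * z) = (Multiplicative.ofAdd (N : ℤ)) ^ k := by
        rw [map_mul, map_zpow, hφa, hSφker hz, mul_one]
      rw [hx2'] at hval
      have hk : k * (N : ℤ) = 0 := by
        have h2 := hval
        rw [← ofAdd_zsmul, eq_comm, ofAdd_eq_one] at h2
        simpa using h2
      have hk0 : k = 0 := by
        rcases mul_eq_zero.mp hk with h | h
        · exact h
        · exfalso; omega
      subst hk0
      simpa using hz
    · exact le_inf (Subgroup.closure_mono (Set.subset_insert _ _))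
        (Subgroup.closure_mono (Set.subset_insert _ _))
  · intro hmem
    have h1 := hΛ'ker hmem
    rw [MonoidHom.mem_ker, hφa, ofAdd_eq_one] at h1
    omega
  · intro hmem
    have h1 := hΛker hmem
    rw [MonoidHom.mem_ker, hψb, ofAdd_eq_one] at h1
    omega
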